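/- If a graph G contains a μ-barricade as a subgraph, then G contains a μ-obstruction of type I as a subgraph. -/

import Mathlib

open Cardinal

universe u v

/-- A well-ordering of the vertices of `G` in which every vertex has
fewer than `μ` neighbours preceding it (a *good* well-ordering for `μ`). -/
def HasGoodOrder {V : Type u} (G : SimpleGraph V) (μ : Cardinal.{u}) : Prop :=
  ∃ r : V → V → Prop, IsWellOrder V r ∧ ∀ v : V, #{w : V | G.Adj v w ∧ r w v} < μ

/-- The colouring number of `G`: the least cardinal `κ` admitting a
well-ordering of the vertices in which each vertex has fewer than `κ`
earlier neighbours. -/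
noncomputable def col {V : Type u} (G : SimpleGraph V) : Cardinal.{u} :=
  sInf {μ : Cardinal.{u} | HasGoodOrder G μ}

/-- `X` is robust (for `μ`): every vertex outside `X` has fewer than `μ`
neighbours inside `X`. -/
def Robust {V : Type u} (G : SimpleGraph V) (μ : Cardinal.{u}) (X : Set V) : Prop :=
  ∀ v ∉ X, #(G.neighborSet v ∩ X : Set V) < μ

/-- `G` contains a `μ`-barricade as a subgraph: disjoint vertex sets `A`, `B`
with `|A| < |B|` such that every vertex of `B` has at least `μ` neighbours in `A`. -/
def HasBarricade {V : Type u} (G : SimpleGraph V) (μ : Cardinal.{u}) : Prop :=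
  ∃ A B : Set V, Disjoint A B ∧ #A < #B ∧
    ∀ b ∈ B, μ ≤ #(G.neighborSet b ∩ A : Set V)

/-- `G` contains a `μ`-obstruction of type I as a subgraph: disjoint sets `A`, `B`
with `|A| = λ ≥ μ`, `|B| = λ⁺`, every vertex of `B` having at least `μ`
neighbours in `A` and every vertex of `A` having `λ⁺` neighbours in `B`. -/
def HasTypeIObstruction {V : Type u} (G : SimpleGraph V) (μ : Cardinal.{u}) : Prop :=
  ∃ (A B : Set V) (lam : Cardinal.{u}), Disjoint A B ∧ μ ≤ lam ∧
    #A = lam ∧ #B = Order.succ lam ∧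
    (∀ b ∈ B, μ ≤ #(G.neighborSet b ∩ A : Set V)) ∧
    (∀ a ∈ A, #(G.neighborSet a ∩ B : Set V) = Order.succ lam)

/-- `G` itself is a `μ`-obstruction of type I: a bipartite graph with
bipartition `(A, B)` satisfying the type I conditions. -/
def IsTypeIObstruction {V : Type u} (G : SimpleGraph V) (μ : Cardinal.{u}) : Prop :=
  ∃ (A B : Set V) (lam : Cardinal.{u}), Disjoint A B ∧ A ∪ B = Set.univ ∧
    (∀ a b, G.Adj a b → (a ∈ A ∧ b ∈ B) ∨ (a ∈ B ∧ b ∈ A)) ∧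
    μ ≤ lam ∧ #A = lam ∧ #B = Order.succ lam ∧
    (∀ b ∈ B, μ ≤ #(G.neighborSet b ∩ A : Set V)) ∧
    (∀ a ∈ A, #(G.neighborSet a ∩ B : Set V) = Order.succ lam)

/-- `C` is closed and unbounded in the ordinal `o`. -/
def IsClubIn (C : Set Ordinal.{v}) (o : Ordinal.{v}) : Prop :=
  (∀ a < o, ∃ b ∈ C, a ≤ b ∧ b < o) ∧
  (∀ a < o, a ≠ 0 → sSup (C ∩ Set.Iio a) = a → a ∈ C)

/-- `S` is stationary in the ordinal `o`: it meets every club subset of `o`. -/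
def IsStationaryIn (S : Set Ordinal.{v}) (o : Ordinal.{v}) : Prop :=
  ∀ C : Set Ordinal.{v}, IsClubIn C o → (S ∩ C ∩ Set.Iio o).Nonempty

/-- The set `T_H` of vertices `α` (ordinals) with `cf α = cf μ`, whose set of
neighbours below `α` has order type `μ` and supremum `α`. -/
noncomputable def typeIITarget (H : SimpleGraph Ordinal.{v}) (μ : Cardinal.{v}) :
    Set Ordinal.{v} :=
  {α | α.cof = μ.ord.cof ∧
    Ordinal.type (Subrel ((· < ·) : Ordinal.{v} → Ordinal.{v} → Prop)
      (· ∈ H.neighborSet α ∩ Set.Iio α)) = Ordinal.lift.{v + 1} μ.ord ∧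
    sSup (H.neighborSet α ∩ Set.Iio α) = α}

/-- `H` is a `μ`-obstruction of type II with vertex set the regular cardinal
`κ > μ` (realised as the ordinals below `κ`): `T_H` is stationary in `κ`. -/
def IsTypeIIObstruction (H : SimpleGraph Ordinal.{v}) (μ κ : Cardinal.{v}) : Prop :=
  μ < κ ∧ κ.IsRegular ∧ (∀ a b, H.Adj a b → a < κ.ord ∧ b < κ.ord) ∧
  IsStationaryIn (typeIITarget H μ) κ.ord

/-- `G` contains a `μ`-obstruction of type II as a subgraph. -/
def HasTypeIIObstruction {V : Type u} (G : SimpleGraph V) (μ : Cardinal.{v}) : Prop :=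
  ∃ (κ : Cardinal.{v}) (H : SimpleGraph Ordinal.{v}) (f : Ordinal.{v} → V),
    Set.InjOn f (Set.Iio κ.ord) ∧ (∀ a b, H.Adj a b → G.Adj (f a) (f b)) ∧
    IsTypeIIObstruction H μ κ

/-- `G` contains a complete subgraph on `μ` vertices. -/
def HasCompleteSubgraph {V : Type u} (G : SimpleGraph V) (μ : Cardinal.{u}) : Prop :=
  ∃ S : Set V, #S = μ ∧ S.Pairwise G.Adj

/-- `G` contains an induced copy of the complete bipartite graph `K_{k,ω}`. -/
def HasInducedKkOmega {V : Type u} (G : SimpleGraph V) (k : ℕ) : Prop :=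
  ∃ A B : Set V, Disjoint A B ∧ #A = (k : Cardinal.{u}) ∧ #B = ℵ₀ ∧
    (∀ a ∈ A, ∀ b ∈ B, G.Adj a b) ∧
    (∀ a ∈ A, ∀ a' ∈ A, a ≠ a' → ¬ G.Adj a a') ∧
    (∀ b ∈ B, ∀ b' ∈ B, b ≠ b' → ¬ G.Adj b b')

/-- a graph containing a `μ`-barricade contains a `μ`-obstruction
of type I as a subgraph. -/
theorem stmt2 {V : Type u} (G : SimpleGraph V) (μ : Cardinal.{u}) (hμ : ℵ₀ ≤ μ)
    (h : HasBarricade G μ) : HasTypeIObstruction G μ := by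
  classical
  -- the set of cardinalities of "A-sides" of barricades
  set S : Set Cardinal.{u} :=
    {κ | ∃ A B : Set V, Disjoint A B ∧ #A = κ ∧ #A < #B ∧
      ∀ b ∈ B, μ ≤ #(G.neighborSet b ∩ A : Set V)} with hS
  have hSne : S.Nonempty := by
    obtain ⟨A, B, hd, hlt, hnb⟩ := h
    exact ⟨#A, A, B, hd, rfl, hlt, hnb⟩
  set lam : Cardinal.{u} := sInf S with hlam
  have hmem : lam ∈ S := csInf_mem hSne
  obtain ⟨A, B, hd, hAcard, hlt, hnb⟩ := hmem
  -- B is nonempty, so μ ≤ #A = lam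
  have hBne : Nonempty (B : Set V) := by
    rw [← Cardinal.mk_ne_zero_iff]
    intro h0
    rw [h0] at hlt
    exact (Cardinal.zero_le _).not_gt hlt
  obtain ⟨b0, hb0⟩ := hBne
  have hμlam : μ ≤ lam := by
    calc μ ≤ #(G.neighborSet b0 ∩ A : Set V) := hnb b0 hb0
    _ ≤ #A := Cardinal.mk_le_mk_of_subset Set.inter_subset_right
    _ = lam := hAcard
  have hℵlam : ℵ₀ ≤ lam := hμ.trans hμlam
  -- shrink B to a set of size lam⁺
  have hsucc : Order.succ lam ≤ #B := by
    rw [Order.succ_le_iff]; rwa [hAcard] at hlt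
  obtain ⟨B₁, hB₁sub, hB₁card⟩ := Cardinal.le_mk_iff_exists_subset.mp hsucc
  have hnb₁ : ∀ b ∈ B₁, μ ≤ #(G.neighborSet b ∩ A : Set V) :=
    fun b hb => hnb b (hB₁sub hb)
  -- split A
  set A₀ : Set V := {a ∈ A | Order.succ lam ≤ #(G.neighborSet a ∩ B₁ : Set V)} with hA₀
  set A₁ : Set V := A \ A₀ with hA₁
  have hA₀sub : A₀ ⊆ A := fun a ha => ha.1
  have hA₁small : ∀ a ∈ A₁, #(G.neighborSet a ∩ B₁ : Set V) ≤ lam := by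
    intro a ha
    have : ¬ Order.succ lam ≤ #(G.neighborSet a ∩ B₁ : Set V) := by
      intro hc; exact ha.2 ⟨ha.1, hc⟩
    rwa [Order.succ_le_iff, not_lt] at this
  have hA₁le : #A₁ ≤ lam := hAcard ▸ Cardinal.mk_le_mk_of_subset Set.diff_subset
  -- the bad part of B₁
  set B' : Set V := {b ∈ B₁ | μ ≤ #(G.neighborSet b ∩ A₁ : Set V)} with hB'
  have hB'le : #B' ≤ lam := by
    have hsub : B' ⊆ ⋃ a : A₁, (G.neighborSet (a : V) ∩ B₁ : Set V) := by
      intro b hb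
      have hpos : (0 : Cardinal) < #(G.neighborSet b ∩ A₁ : Set V) :=
        lt_of_lt_of_le (by simpa using Cardinal.aleph0_pos) (hμ.trans hb.2)
      have : Nonempty (G.neighborSet b ∩ A₁ : Set V) := by
        rwa [← Cardinal.mk_ne_zero_iff, ← pos_iff_ne_zero]
      obtain ⟨a, ha⟩ := this
      exact Set.mem_iUnion.mpr ⟨⟨a, ha.2⟩, ha.1.symm, hb.1⟩
    calc #B' ≤ #(⋃ a : A₁, (G.neighborSet (a : V) ∩ B₁ : Set V)) :=
        Cardinal.mk_le_mk_of_subset hsub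
    _ ≤ Cardinal.sum (fun a : A₁ => #(G.neighborSet (a : V) ∩ B₁ : Set V)) :=
        Cardinal.mk_iUnion_le_sum_mk
    _ ≤ Cardinal.sum (fun _ : A₁ => lam) :=
        Cardinal.sum_le_sum _ _ (fun a => hA₁small a a.2)
    _ = #A₁ * lam := Cardinal.sum_const' _ _
    _ ≤ lam * lam := mul_le_mul_left hA₁le lam
    _ = lam := Cardinal.mul_eq_self hℵlam
  -- the good part of B₁
  set B'' : Set V := B₁ \ B' with hB''
  have hB''sub : B'' ⊆ B := fun b hb => hB₁sub hb.1
  have hB''card : #B'' = Order.succ lam := by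
    refine le_antisymm (hB₁card ▸ Cardinal.mk_le_mk_of_subset Set.diff_subset) ?_
    rw [Order.succ_le_iff]
    by_contra hc
    push_neg at hc
    have hc' : #B'' ≤ lam := (Order.lt_succ_iff_of_not_isMax (not_isMax lam)).mp
      (lt_of_le_of_lt hc (Order.lt_succ lam))
    have hsplit : #B₁ ≤ #B'' + #B' := by
      refine le_trans (Cardinal.mk_le_mk_of_subset ?_) (Cardinal.mk_union_le _ _)
      intro b hb
      by_cases hbB' : b ∈ B'
      · exact Or.inr hbB'
      · exact Or.inl ⟨hb, hbB'⟩
    have : Order.succ lam ≤ lam := by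
      calc Order.succ lam = #B₁ := hB₁card.symm
      _ ≤ #B'' + #B' := hsplit
      _ ≤ lam + lam := add_le_add hc' hB'le
      _ = lam := Cardinal.add_eq_self hℵlam
    exact (Order.lt_succ lam).not_ge this
  -- every b ∈ B'' has ≥ μ neighbours in A₀
  have hnbA₀ : ∀ b ∈ B'', μ ≤ #(G.neighborSet b ∩ A₀ : Set V) := by
    intro b hb
    have hA₁lt : #(G.neighborSet b ∩ A₁ : Set V) < μ := by
      by_contra hc
      push_neg at hc
      exact hb.2 ⟨hb.1, hc⟩
    by_contra hc
    push_neg at hc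
    have hAeq : (G.neighborSet b ∩ A : Set V) ⊆
        (G.neighborSet b ∩ A₀) ∪ (G.neighborSet b ∩ A₁) := by
      intro x hx
      by_cases hx0 : x ∈ A₀
      · exact Or.inl ⟨hx.1, hx0⟩
      · exact Or.inr ⟨hx.1, hx.2, hx0⟩
    have : μ ≤ #(G.neighborSet b ∩ A₀ : Set V) + #(G.neighborSet b ∩ A₁ : Set V) :=
      le_trans (hnb₁ b hb.1) (le_trans (Cardinal.mk_le_mk_of_subset hAeq)
        (Cardinal.mk_union_le _ _))
    exact this.not_gt (Cardinal.add_lt_of_lt hμ hc hA₁lt)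
  -- disjointness
  have hdisj : Disjoint A₀ B'' :=
    Set.disjoint_of_subset hA₀sub hB''sub hd
  -- #A₀ = lam by minimality
  have hA₀card : #A₀ = lam := by
    refine le_antisymm (hAcard ▸ Cardinal.mk_le_mk_of_subset hA₀sub) ?_
    by_contra hc
    push_neg at hc
    have hmem' : #A₀ ∈ S := by
      refine ⟨A₀, B'', hdisj, rfl, ?_, hnbA₀⟩
      rw [hB''card]
      exact lt_of_lt_of_le hc (Order.le_succ lam)
    exact hc.not_ge (csInf_le' hmem')
  -- every a ∈ A₀ has exactly lam⁺ neighbours in B''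
  have hnbB'' : ∀ a ∈ A₀, #(G.neighborSet a ∩ B'' : Set V) = Order.succ lam := by
    intro a ha
    refine le_antisymm (hB''card ▸ Cardinal.mk_le_mk_of_subset Set.inter_subset_right) ?_
    by_contra hc
    push_neg at hc
    have hc' : #(G.neighborSet a ∩ B'' : Set V) ≤ lam :=
      (Order.lt_succ_iff_of_not_isMax (not_isMax lam)).mp hc
    have hsub : (G.neighborSet a ∩ B₁ : Set V) ⊆ (G.neighborSet a ∩ B'') ∪ B' := by
      intro x hx
      by_cases hxB' : x ∈ B'
      · exact Or.inr hxB'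
      · exact Or.inl ⟨hx.1, hx.2, hxB'⟩
    have : Order.succ lam ≤ lam := by
      calc Order.succ lam ≤ #(G.neighborSet a ∩ B₁ : Set V) := ha.2
      _ ≤ #(G.neighborSet a ∩ B'' : Set V) + #B' :=
        le_trans (Cardinal.mk_le_mk_of_subset hsub) (Cardinal.mk_union_le _ _)
      _ ≤ lam + lam := add_le_add hc' hB'le
      _ = lam := Cardinal.add_eq_self hℵlam
    exact (Order.lt_succ lam).not_ge this
  exact ⟨A₀, B'', lam, hdisj, hμlam, hA₀card, hB''card, hnbA₀, hnbB''⟩
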